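/- For the absolute value function, its dual function satisfies $\hat{|\cdot|}(\rho) = \frac{2}{\pi}(\rho \arcsin(\rho) + \sin(\arccos(\rho)))$ for all $\rho \in [-1,1]$, where the dual function of $f$ is $\hat{f}(\rho) = \mathbb{E}[f(U_1)f(U_2)]$ with $(U_1,U_2)$ jointly Gaussian, standard marginals and correlation $\rho$. -/

import Mathlib

open MeasureTheory ProbabilityTheory Real Filter intervalIntegral


noncomputable def gd (x : ℝ) : ℝ := (Real.sqrt (2 * π))⁻¹ * rexp (-x ^ 2 / 2)

lemma integral_gaussianReal_eq (g : ℝ → ℝ) :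
    ∫ x, g x ∂(gaussianReal 0 1) = ∫ x, gd x * g x := by
  rw [gaussianReal_of_var_ne_zero _ one_ne_zero]
  have h : (gaussianPDF 0 1) = fun x => (((gaussianPDFReal 0 1 x).toNNReal : NNReal) : ENNReal) :=
    rfl
  rw [h, integral_withDensity_eq_integral_smul
    (measurable_gaussianPDFReal 0 1).real_toNNReal]
  refine integral_congr_ae (Filter.Eventually.of_forall fun x => ?_)
  have h1 : gaussianPDFReal 0 1 x = gd x := by
    unfold gaussianPDFReal gd
    norm_num
  simp only []
  rw [NNReal.smul_def, Real.coe_toNNReal _ (gaussianPDFReal_nonneg 0 1 x), h1, smul_eq_mul]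

lemma exp_half_eq (x : ℝ) : rexp (-x ^ 2 / 2) = rexp (-(1/2 : ℝ) * x ^ 2) := by
  congr 1; ring

lemma integrable_exp_half : Integrable (fun x : ℝ => rexp (-x ^ 2 / 2)) := by
  simp_rw [exp_half_eq]
  exact integrable_exp_neg_mul_sq (by norm_num)

lemma integrable_abs_exp_half : Integrable (fun x : ℝ => |x| * rexp (-x ^ 2 / 2)) := by
  have h := (integrable_mul_exp_neg_mul_sq (b := 1/2) (by norm_num)).abs
  refine h.congr (Filter.Eventually.of_forall fun x => ?_)
  simp only [abs_mul, abs_of_pos (exp_pos _)]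
  rw [exp_half_eq]

lemma integrable_sq_exp_half : Integrable (fun x : ℝ => x ^ 2 * rexp (-x ^ 2 / 2)) := by
  have h := integrable_rpow_mul_exp_neg_mul_sq (b := 1/2) (by norm_num) (s := 2) (by norm_num)
  refine h.congr (Filter.Eventually.of_forall fun x => ?_)
  simp only [Real.rpow_two]
  rw [exp_half_eq]

lemma integrable_cube_exp_half :
    IntegrableOn (fun r : ℝ => r ^ 3 * rexp (-r ^ 2 / 2)) (Set.Ioi 0) := by
  have h := integrableOn_rpow_mul_exp_neg_mul_sq (b := 1/2) (by norm_num) (s := 3) (by norm_num)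
  refine h.congr_fun (fun x _ => ?_) measurableSet_Ioi
  beta_reduce
  rw [show (3 : ℝ) = ((3 : ℕ) : ℝ) by norm_num, Real.rpow_natCast, exp_half_eq]

lemma integrable2d (ρ c : ℝ) (hρ : |ρ| ≤ 1) (hc : |c| ≤ 1) :
    Integrable (fun z : ℝ × ℝ =>
      (2 * π)⁻¹ * (|z.1 * (ρ * z.1 + c * z.2)| * rexp (-(z.1 ^ 2 + z.2 ^ 2) / 2)))
      ((volume : Measure ℝ).prod volume) := by
  have hmaj : Integrable (fun z : ℝ × ℝ =>
      (z.1 ^ 2 * rexp (-z.1 ^ 2 / 2)) * rexp (-z.2 ^ 2 / 2)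
        + (|z.1| * rexp (-z.1 ^ 2 / 2)) * (|z.2| * rexp (-z.2 ^ 2 / 2)))
      ((volume : Measure ℝ).prod volume) :=
    (integrable_sq_exp_half.mul_prod integrable_exp_half).add
      (integrable_abs_exp_half.mul_prod integrable_abs_exp_half)
  refine (Integrable.mono' hmaj ?_ ?_).const_mul _
  · refine Continuous.aestronglyMeasurable ?_
    fun_prop
  · refine Filter.Eventually.of_forall fun z => ?_
    have h1 : rexp (-(z.1 ^ 2 + z.2 ^ 2) / 2) = rexp (-z.1 ^ 2 / 2) * rexp (-z.2 ^ 2 / 2) := by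
      rw [← Real.exp_add]; congr 1; ring
    have hb : |z.1 * (ρ * z.1 + c * z.2)| ≤ z.1 ^ 2 + |z.1| * |z.2| := by
      rw [abs_mul]
      calc |z.1| * |ρ * z.1 + c * z.2| ≤ |z.1| * (|z.1| + |z.2|) := by
            refine mul_le_mul_of_nonneg_left ?_ (abs_nonneg _)
            calc |ρ * z.1 + c * z.2| ≤ |ρ * z.1| + |c * z.2| := abs_add_le _ _
              _ ≤ |z.1| + |z.2| := by
                  rw [abs_mul, abs_mul]
                  have := abs_nonneg z.1
                  have := abs_nonneg z.2
                  nlinarith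
        _ = z.1 ^ 2 + |z.1| * |z.2| := by rw [mul_add, ← sq, sq_abs]
    have he1 : (0:ℝ) ≤ rexp (-z.1 ^ 2 / 2) := (exp_pos _).le
    have he2 : (0:ℝ) ≤ rexp (-z.2 ^ 2 / 2) := (exp_pos _).le
    rw [Real.norm_eq_abs, h1, abs_of_nonneg (by positivity)]
    calc |z.1 * (ρ * z.1 + c * z.2)| * (rexp (-z.1 ^ 2 / 2) * rexp (-z.2 ^ 2 / 2))
        ≤ (z.1 ^ 2 + |z.1| * |z.2|) * (rexp (-z.1 ^ 2 / 2) * rexp (-z.2 ^ 2 / 2)) :=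
          mul_le_mul_of_nonneg_right hb (by positivity)
      _ = (z.1 ^ 2 * rexp (-z.1 ^ 2 / 2)) * rexp (-z.2 ^ 2 / 2)
          + (|z.1| * rexp (-z.1 ^ 2 / 2)) * (|z.2| * rexp (-z.2 ^ 2 / 2)) := by ring

lemma radial_integral : ∫ r in Set.Ioi (0 : ℝ), r ^ 3 * rexp (-r ^ 2 / 2) = 2 := by
  have key := integral_Ioi_of_hasDerivAt_of_tendsto
    (f := fun r : ℝ => -(r ^ 2 + 2) * rexp (-r ^ 2 / 2))
    (f' := fun r : ℝ => r ^ 3 * rexp (-r ^ 2 / 2)) (a := 0) (m := 0)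
    (Continuous.continuousWithinAt (by fun_prop : Continuous fun r : ℝ => -(r ^ 2 + 2) * rexp (-r ^ 2 / 2))) ?_ integrable_cube_exp_half ?_
  · rw [key]; norm_num
  · intro x _
    have hu : HasDerivAt (fun r : ℝ => -r ^ 2 / 2) (-x) x := by
      refine ((hasDerivAt_pow 2 x).neg.div_const 2).congr_deriv ?_
      push_cast; ring
    have he := hu.exp
    have hp : HasDerivAt (fun r : ℝ => -(r ^ 2 + 2)) (-(2 * x)) x := by
      refine ((hasDerivAt_pow 2 x).add_const 2).neg.congr_deriv ?_
      push_cast; ring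
    have := hp.mul he
    refine this.congr_deriv ?_
    ring
  · have h1 : Tendsto (fun s : ℝ => -((2 * (s * rexp (-s)) + 2 * rexp (-s)))) atTop (nhds 0) := by
      have ha := (tendsto_pow_mul_exp_neg_atTop_nhds_zero 1).const_mul 2
      have hb := (tendsto_exp_neg_atTop_nhds_zero).const_mul 2
      simpa using (ha.add hb).neg
    have h2 : Tendsto (fun r : ℝ => r ^ 2 / 2) atTop atTop :=
      (tendsto_pow_atTop two_ne_zero).atTop_div_const (by norm_num)
    have := h1.comp h2
    convert this using 2 with r
    simp only [Function.comp]
    rw [show -r ^ 2 / 2 = -(r ^ 2 / 2) by ring]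
    ring

noncomputable def G (α θ : ℝ) : ℝ := θ * Real.cos α / 2 + Real.sin (2 * θ - α) / 4

lemma hasDerivAt_G (α θ : ℝ) :
    HasDerivAt (G α) (Real.cos θ * Real.cos (θ - α)) θ := by
  have h1 : HasDerivAt (fun t : ℝ => t * Real.cos α / 2) (Real.cos α / 2) θ := by
    simpa using ((hasDerivAt_id θ).mul_const (Real.cos α)).div_const 2
  have h2 : HasDerivAt (fun t : ℝ => Real.sin (2 * t - α) / 4) (Real.cos (2 * θ - α) / 2) θ := by
    have hin : HasDerivAt (fun t : ℝ => 2 * t - α) 2 θ := by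
      simpa using ((hasDerivAt_id θ).const_mul 2).sub_const α
    have := (hin.sin).div_const 4
    refine this.congr_deriv ?_
    ring
  have := h1.add h2
  refine this.congr_deriv ?_
  have e1 : Real.cos α = Real.cos θ * Real.cos (θ - α) + Real.sin θ * Real.sin (θ - α) := by
    rw [← Real.cos_sub]; ring_nf
  have e2 : Real.cos (2 * θ - α)
      = Real.cos θ * Real.cos (θ - α) - Real.sin θ * Real.sin (θ - α) := by
    rw [← Real.cos_add]; ring_nf
  rw [e1, e2]; ring

lemma cosmul_cont (α : ℝ) : Continuous fun θ : ℝ => Real.cos θ * Real.cos (θ - α) := by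
  fun_prop

lemma piece_eq (α a b : ℝ) : ∫ θ in a..b, Real.cos θ * Real.cos (θ - α) = G α b - G α a :=
  integral_eq_sub_of_hasDerivAt (fun θ _ => hasDerivAt_G α θ)
    ((cosmul_cont α).intervalIntegrable a b)

lemma piece_pos (α a b : ℝ)
    (h : ∀ θ ∈ Set.uIcc a b, 0 ≤ Real.cos θ * Real.cos (θ - α)) :
    ∫ θ in a..b, |Real.cos θ * Real.cos (θ - α)| = G α b - G α a := by
  rw [← piece_eq]
  exact integral_congr fun θ hθ => abs_of_nonneg (h θ hθ)

lemma piece_neg (α a b : ℝ)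
    (h : ∀ θ ∈ Set.uIcc a b, Real.cos θ * Real.cos (θ - α) ≤ 0) :
    ∫ θ in a..b, |Real.cos θ * Real.cos (θ - α)| = -(G α b - G α a) := by
  rw [← piece_eq, ← intervalIntegral.integral_neg]
  exact integral_congr fun θ hθ => abs_of_nonpos (h θ hθ)

lemma angular_nonneg (α : ℝ) (hα0 : 0 ≤ α) (hα : α ≤ π / 2) :
    ∫ θ in (-π)..π, |Real.cos θ * Real.cos (θ - α)| =
      (π - 2 * α) * Real.cos α + 2 * Real.sin α := by
  have hπ := pi_pos
  have hii : ∀ a b : ℝ, IntervalIntegrable (fun θ => |Real.cos θ * Real.cos (θ - α)|)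
      volume a b := fun a b => ((cosmul_cont α).abs).intervalIntegrable a b
  rw [← integral_add_adjacent_intervals (hii (-π) (-(π/2))) (hii (-(π/2)) π),
      ← integral_add_adjacent_intervals (hii (-(π/2)) (α - π/2)) (hii (α - π/2) π),
      ← integral_add_adjacent_intervals (hii (α - π/2) (π/2)) (hii (π/2) π),
      ← integral_add_adjacent_intervals (hii (π/2) (α + π/2)) (hii (α + π/2) π)]
  have h1 : ∫ θ in (-π)..(-(π/2)), |Real.cos θ * Real.cos (θ - α)|
      = G α (-(π/2)) - G α (-π) := by
    refine piece_pos α _ _ fun θ hθ => ?_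
    rw [Set.uIcc_of_le (by linarith)] at hθ
    obtain ⟨h1, h2⟩ := hθ
    have hc1 : Real.cos θ ≤ 0 := by
      rw [← Real.cos_neg]
      exact Real.cos_nonpos_of_pi_div_two_le_of_le (by linarith) (by linarith)
    have hc2 : Real.cos (θ - α) ≤ 0 := by
      rw [← Real.cos_neg, neg_sub]
      exact Real.cos_nonpos_of_pi_div_two_le_of_le (by linarith) (by linarith)
    nlinarith
  have h2 : ∫ θ in (-(π/2))..(α - π/2), |Real.cos θ * Real.cos (θ - α)|
      = -(G α (α - π/2) - G α (-(π/2))) := by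
    refine piece_neg α _ _ fun θ hθ => ?_
    rw [Set.uIcc_of_le (by linarith)] at hθ
    obtain ⟨ha, hb⟩ := hθ
    have hc1 : 0 ≤ Real.cos θ :=
      Real.cos_nonneg_of_mem_Icc ⟨by linarith, by linarith⟩
    have hc2 : Real.cos (θ - α) ≤ 0 := by
      rw [← Real.cos_neg, neg_sub]
      exact Real.cos_nonpos_of_pi_div_two_le_of_le (by linarith) (by linarith)
    nlinarith
  have h3 : ∫ θ in (α - π/2)..(π/2), |Real.cos θ * Real.cos (θ - α)|
      = G α (π/2) - G α (α - π/2) := by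
    refine piece_pos α _ _ fun θ hθ => ?_
    rw [Set.uIcc_of_le (by linarith)] at hθ
    obtain ⟨ha, hb⟩ := hθ
    have hc1 : 0 ≤ Real.cos θ :=
      Real.cos_nonneg_of_mem_Icc ⟨by linarith, by linarith⟩
    have hc2 : 0 ≤ Real.cos (θ - α) :=
      Real.cos_nonneg_of_mem_Icc ⟨by linarith, by linarith⟩
    exact mul_nonneg hc1 hc2
  have h4 : ∫ θ in (π/2)..(α + π/2), |Real.cos θ * Real.cos (θ - α)|
      = -(G α (α + π/2) - G α (π/2)) := by
    refine piece_neg α _ _ fun θ hθ => ?_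
    rw [Set.uIcc_of_le (by linarith)] at hθ
    obtain ⟨ha, hb⟩ := hθ
    have hc1 : Real.cos θ ≤ 0 :=
      Real.cos_nonpos_of_pi_div_two_le_of_le (by linarith) (by linarith)
    have hc2 : 0 ≤ Real.cos (θ - α) :=
      Real.cos_nonneg_of_mem_Icc ⟨by linarith, by linarith⟩
    nlinarith
  have h5 : ∫ θ in (α + π/2)..π, |Real.cos θ * Real.cos (θ - α)|
      = G α π - G α (α + π/2) := by
    refine piece_pos α _ _ fun θ hθ => ?_
    rw [Set.uIcc_of_le (by linarith)] at hθ
    obtain ⟨ha, hb⟩ := hθ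
    have hc1 : Real.cos θ ≤ 0 :=
      Real.cos_nonpos_of_pi_div_two_le_of_le (by linarith) (by linarith)
    have hc2 : Real.cos (θ - α) ≤ 0 :=
      Real.cos_nonpos_of_pi_div_two_le_of_le (by linarith) (by linarith)
    nlinarith
  rw [h1, h2, h3, h4, h5]
  unfold G
  have hs0 : Real.sin (2 * -π - α) = -Real.sin α := by
    rw [Real.sin_sub, show (2:ℝ) * -π = -(2*π) by ring]
    simp
  have hs1 : Real.sin (2 * -(π/2) - α) = Real.sin α := by
    rw [show (2:ℝ) * -(π/2) - α = -(π + α) by ring, Real.sin_neg, Real.sin_add]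
    simp
  have hs2 : Real.sin (2 * (α - π/2) - α) = -Real.sin α := by
    rw [show (2:ℝ) * (α - π/2) - α = α - π by ring, Real.sin_sub]
    simp
  have hs3 : Real.sin (2 * (π/2) - α) = Real.sin α := by
    rw [show (2:ℝ) * (π/2) - α = π - α by ring, Real.sin_pi_sub]
  have hs4 : Real.sin (2 * (α + π/2) - α) = -Real.sin α := by
    rw [show (2:ℝ) * (α + π/2) - α = α + π by ring, Real.sin_add]
    simp
  have hs5 : Real.sin (2 * π - α) = -Real.sin α := by
    rw [Real.sin_sub]
    simp
  rw [hs0, hs1, hs2, hs3, hs4, hs5]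
  ring

lemma angular (ρ : ℝ) (hρ : ρ ∈ Set.Icc (-1 : ℝ) 1) :
    ∫ θ in (-π)..π, |Real.cos θ * Real.cos (θ - Real.arccos ρ)| =
      2 * (ρ * Real.arcsin ρ + Real.sin (Real.arccos ρ)) := by
  obtain ⟨hρ1, hρ2⟩ := hρ
  rcases le_or_gt 0 ρ with hsgn | hsgn
  · have h := angular_nonneg (Real.arccos ρ) (Real.arccos_nonneg ρ)
      ((Real.arccos_le_pi_div_two).2 hsgn)
    rw [h, Real.cos_arccos hρ1 hρ2, Real.arcsin_eq_pi_div_two_sub_arccos]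
    ring
  · set α := Real.arccos ρ with hα
    set β := π - α with hβ
    have hαπ : α ≤ π := Real.arccos_le_pi ρ
    have hα2 : π / 2 ≤ α := by
      rw [hα, Real.arccos_eq_pi_div_two_sub_arcsin]
      have := Real.arcsin_nonpos.2 hsgn.le
      linarith
    have key : ∀ θ : ℝ, |Real.cos (-θ) * Real.cos (-θ - β)| =
        |Real.cos θ * Real.cos (θ - α)| := by
      intro θ
      have e1 : Real.cos (-θ) = Real.cos θ := Real.cos_neg θ
      have e2 : Real.cos (-θ - β) = -Real.cos (θ - α) := by
        rw [show -θ - β = -(θ - α + π) by rw [hβ]; ring, Real.cos_neg, Real.cos_add_pi]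
      rw [e1, e2, mul_neg, abs_neg]
    have hi : ∫ θ in (-π)..π, |Real.cos θ * Real.cos (θ - α)|
        = ∫ θ in (-π)..π, |Real.cos θ * Real.cos (θ - β)| := by
      have h2 := intervalIntegral.integral_comp_neg (a := -π) (b := π)
        (fun θ => |Real.cos θ * Real.cos (θ - β)|)
      simp only [neg_neg] at h2
      rw [← h2]
      exact integral_congr fun θ _ => (key θ).symm
    rw [hi, angular_nonneg β (by linarith) (by rw [hβ]; linarith)]
    rw [hβ, Real.cos_pi_sub, Real.sin_pi_sub, Real.cos_arccos hρ1 hρ2,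
      Real.arcsin_eq_pi_div_two_sub_arccos]
    ring

/-- The dual function of `f ∈ L²(N(0,1))`: `f̂(ρ) = E[f(U₁)f(U₂)]` where `(U₁,U₂)` is
jointly Gaussian with standard marginals and correlation `ρ`, realized as
`U₁ = X`, `U₂ = ρX + √(1-ρ²)Y` with `X, Y` independent standard Gaussians. -/
noncomputable def dualFn (f : ℝ → ℝ) (ρ : ℝ) : ℝ :=
  ∫ x, ∫ y, f x * f (ρ * x + Real.sqrt (1 - ρ ^ 2) * y)
    ∂(gaussianReal 0 1) ∂(gaussianReal 0 1)

theorem dual_abs (ρ : ℝ) (hρ : ρ ∈ Set.Icc (-1 : ℝ) 1) :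
    dualFn (fun s => |s|) ρ =
      (2 / π) * (ρ * Real.arcsin ρ + Real.sin (Real.arccos ρ)) := by
  obtain ⟨hρ1, hρ2⟩ := hρ
  have hπ := pi_pos
  set c := Real.sqrt (1 - ρ ^ 2) with hc
  have hc0 : 0 ≤ c := Real.sqrt_nonneg _
  have hc1 : |c| ≤ 1 := by
    rw [abs_of_nonneg hc0, hc]
    have h := Real.sqrt_le_sqrt (show 1 - ρ ^ 2 ≤ 1 by nlinarith)
    rwa [Real.sqrt_one] at h
  have hρabs : |ρ| ≤ 1 := abs_le.2 ⟨hρ1, hρ2⟩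
  set α := Real.arccos ρ with hα
  have hcos : Real.cos α = ρ := Real.cos_arccos hρ1 hρ2
  have hsin : Real.sin α = c := Real.sin_arccos ρ
  rw [dualFn]
  rw [integral_gaussianReal_eq]
  simp_rw [integral_gaussianReal_eq]
  have hpt : ∀ x : ℝ, gd x * ∫ y, gd y * (|x| * |ρ * x + c * y|)
      = ∫ y, (2 * π)⁻¹ * (|x * (ρ * x + c * y)| * rexp (-(x ^ 2 + y ^ 2) / 2)) := by
    intro x
    rw [← MeasureTheory.integral_const_mul]
    congr 1
    funext y
    unfold gd
    rw [abs_mul]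
    have hsq : (Real.sqrt (2 * π))⁻¹ * (Real.sqrt (2 * π))⁻¹ = (2 * π)⁻¹ := by
      rw [← mul_inv, Real.mul_self_sqrt (by positivity)]
    have hexp : rexp (-x ^ 2 / 2) * rexp (-y ^ 2 / 2) = rexp (-(x ^ 2 + y ^ 2) / 2) := by
      rw [← Real.exp_add]; congr 1; ring
    calc (Real.sqrt (2 * π))⁻¹ * rexp (-x ^ 2 / 2) *
          ((Real.sqrt (2 * π))⁻¹ * rexp (-y ^ 2 / 2) * (|x| * |ρ * x + c * y|))
        = ((Real.sqrt (2 * π))⁻¹ * (Real.sqrt (2 * π))⁻¹) *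
          ((rexp (-x ^ 2 / 2) * rexp (-y ^ 2 / 2)) * (|x| * |ρ * x + c * y|)) := by ring
      _ = (2 * π)⁻¹ * (|x| * |ρ * x + c * y| * rexp (-(x ^ 2 + y ^ 2) / 2)) := by
          rw [hsq, hexp]; ring
  simp_rw [← hc, hpt]
  rw [integral_integral (integrable2d ρ c hρabs hc1), ← Measure.volume_eq_prod]
  rw [MeasureTheory.integral_const_mul]
  rw [← integral_comp_polarCoord_symm
    (fun z : ℝ × ℝ => |z.1 * (ρ * z.1 + c * z.2)| * rexp (-(z.1 ^ 2 + z.2 ^ 2) / 2))]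
  have htarget : polarCoord.target = Set.Ioi (0:ℝ) ×ˢ Set.Ioo (-π) π := rfl
  have heq : Set.EqOn
      (fun p : ℝ × ℝ => p.1 • ((fun z : ℝ × ℝ =>
        |z.1 * (ρ * z.1 + c * z.2)| * rexp (-(z.1 ^ 2 + z.2 ^ 2) / 2)) (polarCoord.symm p)))
      (fun p : ℝ × ℝ => (p.1 ^ 3 * rexp (-p.1 ^ 2 / 2)) * |Real.cos p.2 * Real.cos (p.2 - α)|)
      polarCoord.target := by
    rintro ⟨r, θ⟩ hp
    rw [htarget] at hp
    have hr : 0 < r := hp.1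
    have hsymm : polarCoord.symm (r, θ) = (r * Real.cos θ, r * Real.sin θ) := rfl
    simp only [hsymm]
    have h1 : (r * Real.cos θ) ^ 2 + (r * Real.sin θ) ^ 2 = r ^ 2 := by
      have := Real.sin_sq_add_cos_sq θ
      nlinarith
    have h2 : r * Real.cos θ * (ρ * (r * Real.cos θ) + c * (r * Real.sin θ))
        = r ^ 2 * (Real.cos θ * Real.cos (θ - α)) := by
      rw [Real.cos_sub, hcos, hsin]
      ring
    rw [h1, h2, abs_mul, abs_of_nonneg (sq_nonneg r), smul_eq_mul]
    ring
  rw [setIntegral_congr_fun polarCoord.open_target.measurableSet heq]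
  rw [htarget, Measure.volume_eq_prod, setIntegral_prod_mul (fun r : ℝ => r ^ 3 * rexp (-r ^ 2 / 2))
      (fun θ : ℝ => |Real.cos θ * Real.cos (θ - α)|) (Set.Ioi 0) (Set.Ioo (-π) π),
    radial_integral,
    ← integral_Ioc_eq_integral_Ioo, ← intervalIntegral.integral_of_le (by linarith),
    angular ρ ⟨hρ1, hρ2⟩]
  field_simp
  ring
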